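/- Fix 1 ≤ d ≤ n and let p be a function from subsets of {1,…,n} to ℝ ∪ {∞} with p(S) = ∞ whenever |S| ≠ d, p not identically ∞, satisfying the valuated matroid exchange axiom: for every (d−1)-subset σ and every (d+1)-subset τ, the minimum of p(σ∪{i}) + p(τ∖{i}) over i ∈ τ (arithmetic in ℝ ∪ {∞}) is attained at least twice. Let L_p be the set of x ∈ (ℝ ∪ {∞})ⁿ, not identically ∞, such that for every (d+1)-subset τ, the minimum of p(τ∖{i}) + x_i over i ∈ τ is attained at least twice. Then x ∈ L_p if and only if there exist coefficients λ_σ ∈ ℝ ∪ {∞}, indexed by the (d−1)-subsets σ of {1,…,n}, such that x_j = min_σ (λ_σ + p(σ ∪ {j})) for all j ∈ {1,…,n}. (The tropical linear space L_p is the tropical convex hull of the cocircuits p(σ∗) of the valuated matroid p.) -/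

import Mathlib

/- A tropical linear space is the tropical convex hull of the cocircuits of its valuated
   matroid: for a valuated matroid p of rank d on {1,…,n} (values in ℝ ∪ {∞}) and a point
   x ∈ (ℝ ∪ {∞})ⁿ not identically ∞, x ∈ L_p iff there are coefficients λ_σ ∈ ℝ ∪ {∞}
   with x_j = min_σ (λ_σ + p(σ ∪ {j})) for all j. -/

noncomputable section

/-- The minimum of `f` over the finite set `s` is attained at least twice. -/
def MinAttainedTwice {ι α : Type*} [LinearOrder α] (s : Finset ι) (f : ι → α) : Prop :=
  ∃ i ∈ s, ∃ j ∈ s, i ≠ j ∧ f i = f j ∧ ∀ k ∈ s, f i ≤ f k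

/-- A valuated matroid of rank `d` on `{1,…,n}` with values in `ℝ ∪ {∞}`:
`p` is `∞` away from `d`-sets, not identically `∞`, and satisfies the exchange axiom. -/
def IsValuatedMatroidT (d n : ℕ) (p : Finset (Fin n) → WithTop ℝ) : Prop :=
  (∀ S : Finset (Fin n), S.card ≠ d → p S = ⊤) ∧
  (∃ S : Finset (Fin n), p S ≠ ⊤) ∧
  (∀ σ τ : Finset (Fin n), σ.card = d - 1 → τ.card = d + 1 →
    MinAttainedTwice τ (fun i => p (insert i σ) + p (τ.erase i)))

private lemma withtop_repr (a : WithTop ℝ) (ha : a ≠ ⊤) : a = ((a.untopD 0 : ℝ) : WithTop ℝ) := by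
  cases a with
  | top => exact absurd rfl ha
  | coe r => rfl

/-- From a twice-attained minimum, extract a minimizer different from a given index. -/
private lemma pick_min_ne {ι α : Type*} [LinearOrder α] {s : Finset ι} {f : ι → α}
    (h : MinAttainedTwice s f) (j : ι) :
    ∃ i ∈ s, i ≠ j ∧ ∀ k ∈ s, f i ≤ f k := by
  obtain ⟨i₁, h1, i₂, h2, hne, heq, hmin⟩ := h
  by_cases hij : i₁ = j
  · exact ⟨i₂, h2, fun hc => hne (hij.trans hc.symm), fun k hk => by rw [← heq]; exact hmin k hk⟩
  · exact ⟨i₁, h1, hij, hmin⟩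

open Classical in
/-- Coefficient of the cocircuit at `σ`: tropical sup over `k` of `x k ⊘ p (σ ∪ {k})`. -/
private noncomputable def lamAux {n : ℕ} (p : Finset (Fin n) → WithTop ℝ)
    (x : Fin n → WithTop ℝ) (σ : Finset (Fin n)) : WithTop ℝ :=
  if h : (∃ k, p (insert k σ) ≠ ⊤) ∧ ∀ k, p (insert k σ) ≠ ⊤ → x k ≠ ⊤ then
    (((Finset.univ.filter fun k => p (insert k σ) ≠ ⊤).sup'
        (h.1.imp fun k hk => Finset.mem_filter.2 ⟨Finset.mem_univ k, hk⟩)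
        fun k => (x k).untopD 0 - (p (insert k σ)).untopD 0 : ℝ) : WithTop ℝ)
  else ⊤

private lemma lamAux_lower {n : ℕ} (p : Finset (Fin n) → WithTop ℝ) (x : Fin n → WithTop ℝ)
    (σ : Finset (Fin n)) (j : Fin n) : x j ≤ lamAux p x σ + p (insert j σ) := by
  unfold lamAux
  split_ifs with h
  · by_cases hpj : p (insert j σ) = ⊤
    · rw [hpj, add_top]; exact le_top
    · have hxj := h.2 j hpj
      rw [withtop_repr _ hxj, withtop_repr _ hpj, ← WithTop.coe_add, WithTop.coe_le_coe]
      have hj : j ∈ Finset.univ.filter (fun k => p (insert k σ) ≠ ⊤) :=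
        Finset.mem_filter.2 ⟨Finset.mem_univ _, hpj⟩
      have := Finset.le_sup' (f := fun k => (x k).untopD 0 - (p (insert k σ)).untopD 0) hj
      linarith
  · rw [top_add]; exact le_top

private lemma lamAux_top {n : ℕ} (p : Finset (Fin n) → WithTop ℝ) (x : Fin n → WithTop ℝ)
    (σ : Finset (Fin n)) (j : Fin n) (hxj : x j = ⊤) :
    lamAux p x σ + p (insert j σ) = ⊤ := by
  by_cases hpj : p (insert j σ) = ⊤
  · rw [hpj, add_top]
  · unfold lamAux
    rw [dif_neg, top_add]
    exact fun h => (h.2 j hpj) hxj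

private lemma lamAux_attain {n : ℕ} (p : Finset (Fin n) → WithTop ℝ) (x : Fin n → WithTop ℝ)
    {B : Finset (Fin n)} {j : Fin n} (hjB : j ∈ B) (hpB : p B ≠ ⊤) (hxj : x j ≠ ⊤)
    (hkey : ∀ k, x k + p B ≤ x j + p (insert k (B.erase j))) :
    lamAux p x (B.erase j) + p B = x j := by
  classical
  set σ := B.erase j with hσ
  have hins : insert j σ = B := Finset.insert_erase hjB
  have hcond : (∃ k, p (insert k σ) ≠ ⊤) ∧ ∀ k, p (insert k σ) ≠ ⊤ → x k ≠ ⊤ := by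
    refine ⟨⟨j, by rw [hins]; exact hpB⟩, fun k hpk hxk => ?_⟩
    have h1 := hkey k
    rw [hxk, top_add] at h1
    exact (WithTop.add_ne_top.2 ⟨hxj, hpk⟩) (top_le_iff.1 h1)
  have hjm : j ∈ Finset.univ.filter fun k => p (insert k σ) ≠ ⊤ :=
    Finset.mem_filter.2 ⟨Finset.mem_univ _, by rw [hins]; exact hpB⟩
  have hsup : ((Finset.univ.filter fun k => p (insert k σ) ≠ ⊤).sup'
      (hcond.1.imp fun k hk => Finset.mem_filter.2 ⟨Finset.mem_univ k, hk⟩)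
      fun k => (x k).untopD 0 - (p (insert k σ)).untopD 0)
      = (x j).untopD 0 - (p B).untopD 0 := by
    apply le_antisymm
    · apply Finset.sup'_le
      intro k hk
      have hpk : p (insert k σ) ≠ ⊤ := (Finset.mem_filter.1 hk).2
      have hxk : x k ≠ ⊤ := hcond.2 k hpk
      have h1 := hkey k
      rw [withtop_repr _ hxk, withtop_repr _ hpk, withtop_repr _ hxj, withtop_repr _ hpB,
        ← WithTop.coe_add, ← WithTop.coe_add, WithTop.coe_le_coe] at h1
      linarith
    · have := Finset.le_sup'
        (f := fun k => (x k).untopD 0 - (p (insert k σ)).untopD 0) hjm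
      simpa [hins] using this
  unfold lamAux
  rw [dif_pos hcond, hsup]
  rw [withtop_repr (p B) hpB, ← WithTop.coe_add]
  simp only [WithTop.untopD_coe]
  have hr : (x j).untopD 0 - (p B).untopD 0 + (p B).untopD 0 = (x j).untopD 0 := by ring
  rw [hr]
  exact (withtop_repr _ hxj).symm


private lemma existsGoodBasis {d n : ℕ} (hd : 1 ≤ d)
    (p : Finset (Fin n) → WithTop ℝ)
    (hsupp : ∀ S : Finset (Fin n), S.card ≠ d → p S = ⊤)
    (hpne : ∃ S, p S ≠ ⊤)
    (x : Fin n → WithTop ℝ)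
    (hL : ∀ τ : Finset (Fin n), τ.card = d + 1 →
      MinAttainedTwice τ (fun i => p (τ.erase i) + x i))
    (j : Fin n) (hxj : x j ≠ ⊤) :
    ∃ B : Finset (Fin n), j ∈ B ∧ p B ≠ ⊤ ∧
      ∀ k, x k + p B ≤ x j + p (insert k (B.erase j)) := by
  classical
  set S1 : ℝ := ∑ B : Finset (Fin n), |(p B).untopD 0| with hS1def
  set S2 : ℝ := ∑ i : Fin n, |(x i).untopD 0| with hS2def
  have hS1 : ∀ B : Finset (Fin n), |(p B).untopD 0| ≤ S1 :=
    fun B => by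
      rw [hS1def]
      exact Finset.single_le_sum (f := fun B => |(p B).untopD 0|)
        (fun _ _ => abs_nonneg _) (Finset.mem_univ B)
  have hS2 : ∀ i, |(x i).untopD 0| ≤ S2 :=
    fun i => by
      rw [hS2def]
      exact Finset.single_le_sum (f := fun i => |(x i).untopD 0|)
        (fun _ _ => abs_nonneg _) (Finset.mem_univ i)
  set M : ℝ := 1 + 2 * S1 + S2 with hMdef
  set xt : Fin n → ℝ := fun i => if x i = ⊤ then M else (x i).untopD 0 with hxt
  set Phi : Finset (Fin n) → ℝ := fun B => (p B).untopD 0 - ∑ i ∈ B.erase j, xt i with hPhi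
  set D : Finset (Finset (Fin n)) := Finset.univ.filter (fun B => j ∈ B ∧ p B ≠ ⊤) with hD
  -- D is nonempty
  have hDne : D.Nonempty := by
    obtain ⟨S, hS⟩ := hpne
    have hScard : S.card = d := by by_contra h; exact hS (hsupp S h)
    by_cases hjS : j ∈ S
    · exact ⟨S, Finset.mem_filter.2 ⟨Finset.mem_univ _, hjS, hS⟩⟩
    · set τ := insert j S with hτ
      have hτcard : τ.card = d + 1 := by rw [hτ, Finset.card_insert_of_notMem hjS, hScard]
      obtain ⟨i, hiτ, hij, hmin⟩ := pick_min_ne (hL τ hτcard) j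
      have hfj : p (τ.erase j) + x j = p S + x j := by rw [hτ, Finset.erase_insert hjS]
      have hfi : p (τ.erase i) + x i ≤ p S + x j := by
        rw [← hfj]; exact hmin j (Finset.mem_insert_self _ _)
      have htop : p S + x j ≠ ⊤ := WithTop.add_ne_top.2 ⟨hS, hxj⟩
      have hpi : p (τ.erase i) ≠ ⊤ :=
        (WithTop.add_ne_top.1 (fun h => htop (top_le_iff.1 (h ▸ hfi)))).1
      refine ⟨τ.erase i, Finset.mem_filter.2 ⟨Finset.mem_univ _, ?_, hpi⟩⟩
      exact Finset.mem_erase.2 ⟨fun h => hij h.symm, Finset.mem_insert_self _ _⟩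
  obtain ⟨B₀, hB₀D, hB₀min⟩ := Finset.exists_min_image D Phi hDne
  obtain ⟨-, hjB₀, hpB₀⟩ := Finset.mem_filter.1 hB₀D
  have hcardB₀ : B₀.card = d := by by_contra h; exact hpB₀ (hsupp B₀ h)
  refine ⟨B₀, hjB₀, hpB₀, fun k => ?_⟩
  by_cases hkB : k ∈ B₀
  · by_cases hkj : k = j
    · subst hkj
      rw [Finset.insert_erase hjB₀, add_comm]
    · have hins : insert k (B₀.erase j) = B₀.erase j :=
        Finset.insert_eq_self.2 (Finset.mem_erase.2 ⟨hkj, hkB⟩)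
      have : p (B₀.erase j) = ⊤ := by
        apply hsupp
        rw [Finset.card_erase_of_mem hjB₀, hcardB₀]
        omega
      rw [hins, this, add_top]
      exact le_top
  · by_contra hlt'
    have hlt : x j + p (insert k (B₀.erase j)) < x k + p B₀ := not_le.1 hlt'
    set B' := insert k (B₀.erase j) with hB'
    set τ := insert k B₀ with hτ
    have hkj : k ≠ j := fun h => hkB (h ▸ hjB₀)
    have hτcard : τ.card = d + 1 := by rw [hτ, Finset.card_insert_of_notMem hkB, hcardB₀]
    have hjτ : j ∈ τ := Finset.mem_insert_of_mem hjB₀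
    obtain ⟨i₀, hi₀τ, hi₀j, hmin₀⟩ := pick_min_ne (hL τ hτcard) j
    have hτk : τ.erase k = B₀ := by rw [hτ, Finset.erase_insert hkB]
    have hτj : τ.erase j = B' := by rw [hτ, hB', Finset.erase_insert_of_ne hkj]
    have hfj_lt_fk : p (τ.erase j) + x j < p (τ.erase k) + x k := by
      rw [hτj, hτk, add_comm (p B') (x j), add_comm (p B₀) (x k)]; exact hlt
    have h1 : p (τ.erase i₀) + x i₀ ≤ p (τ.erase j) + x j := hmin₀ j hjτ
    have hi₀k : i₀ ≠ k := by
      intro h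
      rw [h] at h1
      exact absurd hfj_lt_fk (not_lt.2 h1)
    have hi₀B₀ : i₀ ∈ B₀ := Finset.mem_of_mem_insert_of_ne hi₀τ hi₀k
    have hfi₀_ne : p (τ.erase i₀) + x i₀ ≠ ⊤ := by
      intro h
      rw [h] at h1
      have := top_le_iff.1 h1
      rw [this] at hfj_lt_fk
      exact absurd hfj_lt_fk (not_lt.2 le_top)
    obtain ⟨hpB₂, hxi₀⟩ := WithTop.add_ne_top.1 hfi₀_ne
    have hτi₀ : τ.erase i₀ = insert k (B₀.erase i₀) := by
      rw [hτ, Finset.erase_insert_of_ne (fun h => hi₀k h.symm)]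
    have hjB₂ : j ∈ τ.erase i₀ := Finset.mem_erase.2 ⟨fun h => hi₀j h.symm, hjτ⟩
    have hB₂D : τ.erase i₀ ∈ D := Finset.mem_filter.2 ⟨Finset.mem_univ _, hjB₂, hpB₂⟩
    have hcontra : Phi B₀ ≤ Phi (τ.erase i₀) := hB₀min _ hB₂D
    -- now derive Phi B₂ < Phi B₀
    have hkey : (p (τ.erase i₀)).untopD 0 + (x i₀).untopD 0 < (p B₀).untopD 0 + xt k := by
      by_cases hxk : x k = ⊤
      · have h2 : xt k = M := by rw [hxt]; simp [hxk]
        rw [h2, hMdef]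
        have a1 := hS1 (τ.erase i₀)
        have a2 := hS1 B₀
        have a3 := hS2 i₀
        have := abs_le.1 a1
        have := abs_le.1 a2
        have := abs_le.1 a3
        cases' abs_le.1 a1 with a1l a1r
        cases' abs_le.1 a2 with a2l a2r
        cases' abs_le.1 a3 with a3l a3r
        linarith
      · have h2 : xt k = (x k).untopD 0 := by rw [hxt]; simp [hxk]
        rw [h2]
        have hlt2 : p (τ.erase i₀) + x i₀ < p B₀ + x k := by
          have := lt_of_le_of_lt h1 hfj_lt_fk
          rwa [hτk] at this
        rw [withtop_repr _ hpB₂, withtop_repr _ hxi₀, withtop_repr _ hpB₀, withtop_repr _ hxk,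
          ← WithTop.coe_add, ← WithTop.coe_add, WithTop.coe_lt_coe] at hlt2
        exact hlt2
    -- sum bookkeeping
    have hcomm : (B₀.erase i₀).erase j = (B₀.erase j).erase i₀ := by
      ext a; simp only [Finset.mem_erase]; tauto
    have hB₂e : (τ.erase i₀).erase j = insert k ((B₀.erase j).erase i₀) := by
      rw [hτi₀, Finset.erase_insert_of_ne hkj, hcomm]
    have hknotin : k ∉ (B₀.erase j).erase i₀ :=
      fun h => hkB (Finset.mem_of_mem_erase (Finset.mem_of_mem_erase h))
    have hsum2 : ∑ i ∈ (τ.erase i₀).erase j, xt i = xt k + ∑ i ∈ (B₀.erase j).erase i₀, xt i := by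
      rw [hB₂e, Finset.sum_insert hknotin]
    have hi₀mem : i₀ ∈ B₀.erase j := Finset.mem_erase.2 ⟨hi₀j, hi₀B₀⟩
    have hsum0 : ∑ i ∈ B₀.erase j, xt i = xt i₀ + ∑ i ∈ (B₀.erase j).erase i₀, xt i :=
      (Finset.add_sum_erase _ _ hi₀mem).symm
    have hxti₀ : xt i₀ = (x i₀).untopD 0 := by rw [hxt]; simp [hxi₀]
    have hPhiB₂ : Phi (τ.erase i₀) < Phi B₀ := by
      rw [hPhi]
      simp only
      rw [hsum2, hsum0, hxti₀]
      linarith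
    linarith

theorem tropical_linear_space_eq_tconv_of_cocircuits {d n : ℕ} (hd : 1 ≤ d) (hdn : d ≤ n)
    (p : Finset (Fin n) → WithTop ℝ) (hp : IsValuatedMatroidT d n p)
    (x : Fin n → WithTop ℝ) (hx : ¬ ∀ i, x i = ⊤) :
    (∀ τ : Finset (Fin n), τ.card = d + 1 →
        MinAttainedTwice τ (fun i => p (τ.erase i) + x i)) ↔
    (∃ lam : Finset (Fin n) → WithTop ℝ, ∀ j : Fin n,
        IsLeast {y : WithTop ℝ | ∃ σ : Finset (Fin n),
          σ.card = d - 1 ∧ y = lam σ + p (insert j σ)} (x j)) := by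
  classical
  obtain ⟨hsupp, hpne, hexch⟩ := hp
  constructor
  · intro hL
    refine ⟨lamAux p x, fun j => ?_⟩
    constructor
    · -- membership
      by_cases hxj : x j = ⊤
      · obtain ⟨σ, -, hσcard⟩ := Finset.exists_subset_card_eq (s := (Finset.univ : Finset (Fin n))) (n := d - 1)
          (by simp only [Finset.card_univ, Fintype.card_fin]; omega)
        exact ⟨σ, hσcard, by rw [lamAux_top p x σ j hxj, hxj]⟩
      · obtain ⟨B, hjB, hpB, hkey⟩ := existsGoodBasis hd p hsupp hpne x hL j hxj
        have hBcard : B.card = d := by by_contra h; exact hpB (hsupp B h)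
        refine ⟨B.erase j, by rw [Finset.card_erase_of_mem hjB, hBcard], ?_⟩
        rw [Finset.insert_erase hjB]
        exact (lamAux_attain p x hjB hpB hxj hkey).symm
    · -- lower bound
      rintro y ⟨σ, hσcard, rfl⟩
      exact lamAux_lower p x σ j
  · rintro ⟨lam, hlam⟩ τ hτcard
    have hτne : τ.Nonempty := Finset.card_pos.1 (by omega)
    obtain ⟨i₀, hi₀τ, hmin⟩ := Finset.exists_min_image τ (fun i => p (τ.erase i) + x i) hτne
    by_cases htop : p (τ.erase i₀) + x i₀ = ⊤
    · -- all values are ⊤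
      have hall : ∀ k ∈ τ, p (τ.erase k) + x k = ⊤ :=
        fun k hk => top_le_iff.1 (htop ▸ hmin k hk)
      obtain ⟨a, ha, b, hb, hab⟩ := Finset.one_lt_card.1 (show 1 < τ.card by omega)
      refine ⟨a, ha, b, hb, hab, ?_, fun k hk => ?_⟩
      · show p (τ.erase a) + x a = p (τ.erase b) + x b
        rw [hall a ha, hall b hb]
      · show p (τ.erase a) + x a ≤ p (τ.erase k) + x k
        rw [hall a ha, hall k hk]
    · obtain ⟨σ₀, hσ₀card, hσ₀repr⟩ := (hlam i₀).1
      have hlow : ∀ i, x i ≤ lam σ₀ + p (insert i σ₀) :=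
        fun i => (hlam i).2 ⟨σ₀, hσ₀card, rfl⟩
      have hstar : ∀ i, p (τ.erase i) + x i ≤
          lam σ₀ + (p (insert i σ₀) + p (τ.erase i)) := by
        intro i
        calc p (τ.erase i) + x i ≤ p (τ.erase i) + (lam σ₀ + p (insert i σ₀)) :=
              add_le_add_right (hlow i) _
          _ = lam σ₀ + (p (insert i σ₀) + p (τ.erase i)) := by
              rw [add_comm (p (τ.erase i)), add_assoc]
      have heq0 : lam σ₀ + (p (insert i₀ σ₀) + p (τ.erase i₀)) = p (τ.erase i₀) + x i₀ := by
        rw [hσ₀repr, add_comm (p (τ.erase i₀)), add_assoc]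
      obtain ⟨i₁, hi₁τ, i₂, hi₂τ, hne12, heq12, hgmin⟩ := hexch σ₀ τ hσ₀card hτcard
      have heq12' : p (insert i₁ σ₀) + p (τ.erase i₁) = p (insert i₂ σ₀) + p (τ.erase i₂) := heq12
      have hchain : ∀ i ∈ τ, (∀ l ∈ τ, p (insert i σ₀) + p (τ.erase i) ≤
          p (insert l σ₀) + p (τ.erase l)) → p (τ.erase i) + x i = p (τ.erase i₀) + x i₀ := by
        intro i hiτ hgm
        have h1 : p (τ.erase i₀) + x i₀ ≤ p (τ.erase i) + x i := hmin i hiτ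
        have h2 : p (τ.erase i) + x i ≤ lam σ₀ + (p (insert i σ₀) + p (τ.erase i)) := hstar i
        have h3 : lam σ₀ + (p (insert i σ₀) + p (τ.erase i)) ≤
            lam σ₀ + (p (insert i₀ σ₀) + p (τ.erase i₀)) :=
          add_le_add_right (hgm i₀ hi₀τ) _
        rw [heq0] at h3
        exact le_antisymm (h2.trans h3) h1
      have hv1 : p (τ.erase i₁) + x i₁ = p (τ.erase i₀) + x i₀ := hchain i₁ hi₁τ hgmin
      have hv2 : p (τ.erase i₂) + x i₂ = p (τ.erase i₀) + x i₀ := by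
        refine hchain i₂ hi₂τ (fun l hl => ?_)
        rw [← heq12']; exact hgmin l hl
      refine ⟨i₁, hi₁τ, i₂, hi₂τ, hne12, ?_, fun k hk => ?_⟩
      · show p (τ.erase i₁) + x i₁ = p (τ.erase i₂) + x i₂
        rw [hv1, hv2]
      · show p (τ.erase i₁) + x i₁ ≤ p (τ.erase k) + x k
        rw [hv1]; exact hmin k hk
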